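/- Let P, P_iso, P_L be binary bipartite conditional distributions (boxes), with P = q·P_iso + (1-q)·P_L a convex combination, q ∈ [0,1]. Then for every deterministic distillation protocol on n copies of P achieving CHSH value v, there exists a deterministic distillation protocol on n copies of P_iso achieving CHSH value at least v; in particular D(n,P) ≤ D(n,P_iso), where D(n,·) denotes the maximal CHSH value achievable by any deterministic protocol on n copies. -/

import Mathlib

open Finset

/-- A binary bipartite box: for each input pair `(x,y) ∈ {0,1}²` a (sub)distribution
on output pairs `(a,b) ∈ {0,1}²`. -/
abbrev BinBox : Type := Bool → Bool → Bool × Bool → ℝ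

/-- `P` assigns a genuine probability distribution to every input pair. -/
def IsBox (P : BinBox) : Prop :=
  (∀ x y ab, 0 ≤ P x y ab) ∧ ∀ x y, ∑ ab : Bool × Bool, P x y ab = 1

/-- Nonsignaling: each party's marginal is independent of the other party's input. -/
def NonSignaling (P : BinBox) : Prop :=
  (∀ x y y' a, ∑ b : Bool, P x y (a, b) = ∑ b : Bool, P x y' (a, b)) ∧
  (∀ x x' y b, ∑ a : Bool, P x y (a, b) = ∑ a : Bool, P x' y (a, b))

/-- A local box: a convex combination of deterministic local strategies. -/
def IsLocalBox (P : BinBox) : Prop :=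
  ∃ c : (Bool → Bool) × (Bool → Bool) → ℝ,
    (∀ s, 0 ≤ c s) ∧ (∑ s : (Bool → Bool) × (Bool → Bool), c s = 1) ∧
    ∀ x y a b, P x y (a, b) =
      ∑ s : (Bool → Bool) × (Bool → Bool),
        c s * (if s.1 x = a ∧ s.2 y = b then 1 else 0)

/-- A deterministic nonlocality distillation protocol on `n` copies of a binary box:
Alice accesses the boxes in the order `1,…,n` (the indexing of the copies follows her
temporal order), Bob accesses them in the temporal order given by the permutation `σ`
(so the wiring may be ordered or disordered); each party's input into a box may depend
(deterministically) on its protocol input and on the outputs of the boxes it has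
already used; finally both parties output one bit computed from their protocol input
and all collected outputs. -/
structure Protocol (n : ℕ) where
  /-- Bob's temporal order: at his step `t` he uses box `σ t`. -/
  σ : Equiv.Perm (Fin n)
  /-- Alice's input into box `i`, given protocol input `x` and her outputs `a`. -/
  Ain : Bool → Fin n → (Fin n → Bool) → Bool
  /-- Bob's input into box `i`, given protocol input `y` and his outputs `b`. -/
  Bin : Bool → Fin n → (Fin n → Bool) → Bool
  /-- Alice's input into box `i` depends only on outputs of boxes used before `i`. -/
  Ain_causal : ∀ x i a a', (∀ j, j < i → a j = a' j) → Ain x i a = Ain x i a'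
  /-- Bob's input into box `i` depends only on outputs of boxes he used before `i`. -/
  Bin_causal : ∀ y i b b', (∀ j, σ.symm j < σ.symm i → b j = b' j) → Bin y i b = Bin y i b'
  /-- Alice's decision functions `f₀, f₁`. -/
  f : Bool → (Fin n → Bool) → Bool
  /-- Bob's decision functions `g₀, g₁`. -/
  g : Bool → (Fin n → Bool) → Bool

/-- The joint wiring distribution `W^{xy}(a,b)` generated by a protocol on `n`
copies of the box `P`. -/
noncomputable def wiringDist (n : ℕ) (P : BinBox) (DP : Protocol n) (x y : Bool)
    (a b : Fin n → Bool) : ℝ :=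
  ∏ i : Fin n, P (DP.Ain x i a) (DP.Bin y i b) (a i, b i)

/-- The correlation `⟨f_x,g_y⟩` of the box simulated by the protocol. -/
noncomputable def protCorr (n : ℕ) (P : BinBox) (DP : Protocol n) (x y : Bool) : ℝ :=
  ∑ a : Fin n → Bool, ∑ b : Fin n → Bool,
    wiringDist n P DP x y a b * (1 - 2 * (if DP.f x a then (1 : ℝ) else 0)) *
      (1 - 2 * (if DP.g y b then (1 : ℝ) else 0))

/-- The CHSH value of a protocol:
`max_{xy} |⟨f_x,g_y⟩ + ⟨f_x̄,g_y⟩ + ⟨f_x,g_ȳ⟩ - ⟨f_x̄,g_ȳ⟩|`. -/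
noncomputable def NLval (n : ℕ) (P : BinBox) (DP : Protocol n) : ℝ :=
  ⨆ xy : Bool × Bool,
    |protCorr n P DP xy.1 xy.2 + protCorr n P DP (!xy.1) xy.2 +
      protCorr n P DP xy.1 (!xy.2) - protCorr n P DP (!xy.1) (!xy.2)|

/-- The distillable nonlocality of `n` copies of `P`: the optimal CHSH value over
all deterministic distillation protocols. -/
noncomputable def Dnl (n : ℕ) (P : BinBox) : ℝ := ⨆ DP : Protocol n, NLval n P DP

/-! ### Auxiliary development for the distillation lifting argument -/

/-- A deterministic local strategy. -/
abbrev Strat : Type := (Bool → Bool) × (Bool → Bool)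

/-- The box used at a copy labelled by `o : Option Strat`: `none` means the genuine
box `Piso`, `some s` means the deterministic local box given by strategy `s`. -/
def Kbox (Piso : BinBox) : Option Strat → BinBox
  | none => Piso
  | some s => fun u v ab => if s.1 u = ab.1 ∧ s.2 v = ab.2 then (1 : ℝ) else 0

variable {n : ℕ}

/-- Alice's virtual outputs: at a local copy the output is computed deterministically
from the strategy, otherwise the genuine output is used. -/
def tildeA (DP : Protocol n) (lam : Fin n → Option Strat) (x : Bool)
    (a : Fin n → Bool) (i : Fin n) : Bool :=
  match lam i with
  | none => a i
  | some s => s.1 (DP.Ain x i (fun j => if h : j.val < i.val then tildeA DP lam x a j else false))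
termination_by i.val

/-- Bob's virtual outputs. -/
def tildeB (DP : Protocol n) (lam : Fin n → Option Strat) (y : Bool)
    (b : Fin n → Bool) (i : Fin n) : Bool :=
  match lam i with
  | none => b i
  | some s => s.2 (DP.Bin y i (fun j =>
      if h : (DP.σ.symm j).val < (DP.σ.symm i).val then tildeB DP lam y b j else false))
termination_by (DP.σ.symm i).val

lemma tildeA_none {DP : Protocol n} {lam : Fin n → Option Strat} {x : Bool}
    {a : Fin n → Bool} {i : Fin n} (h : lam i = none) :
    tildeA DP lam x a i = a i := by
  rw [tildeA, h]

lemma tildeB_none {DP : Protocol n} {lam : Fin n → Option Strat} {y : Bool}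
    {b : Fin n → Bool} {i : Fin n} (h : lam i = none) :
    tildeB DP lam y b i = b i := by
  rw [tildeB, h]

lemma tildeA_some {DP : Protocol n} {lam : Fin n → Option Strat} {x : Bool}
    {a : Fin n → Bool} {i : Fin n} {s : Strat} (h : lam i = some s) :
    tildeA DP lam x a i = s.1 (DP.Ain x i (tildeA DP lam x a)) := by
  rw [tildeA, h]
  exact congrArg s.1 (DP.Ain_causal x i _ _ (fun j hj => by
    rw [dif_pos (show j.val < i.val from hj)]))

lemma tildeB_some {DP : Protocol n} {lam : Fin n → Option Strat} {y : Bool}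
    {b : Fin n → Bool} {i : Fin n} {s : Strat} (h : lam i = some s) :
    tildeB DP lam y b i = s.2 (DP.Bin y i (tildeB DP lam y b)) := by
  rw [tildeB, h]
  exact congrArg s.2 (DP.Bin_causal y i _ _ (fun j hj => by
    rw [dif_pos (show (DP.σ.symm j).val < (DP.σ.symm i).val from hj)]))

lemma tildeA_congr (DP : Protocol n) (lam : Fin n → Option Strat) (x : Bool)
    {a a' : Fin n → Bool} :
    ∀ i : Fin n, (∀ k : Fin n, k.val ≤ i.val → lam k = none → a k = a' k) →
      tildeA DP lam x a i = tildeA DP lam x a' i := by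
  have H : ∀ N, ∀ i : Fin n, i.val < N →
      (∀ k : Fin n, k.val ≤ i.val → lam k = none → a k = a' k) →
      tildeA DP lam x a i = tildeA DP lam x a' i := by
    intro N
    induction N with
    | zero => exact fun i hi => absurd hi (Nat.not_lt_zero _)
    | succ N ih =>
      intro i hi h
      rcases hl : lam i with _ | s
      · rw [tildeA_none hl, tildeA_none hl]
        exact h i le_rfl hl
      · rw [tildeA_some hl, tildeA_some hl]
        refine congrArg s.1 (DP.Ain_causal x i _ _ fun j hj => ?_)
        have hj' : j.val < i.val := hj
        exact ih j (by omega) (fun k hk hk' => h k (by omega) hk')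
  exact fun i => H (i.val + 1) i (Nat.lt_succ_self _)

lemma tildeB_congr (DP : Protocol n) (lam : Fin n → Option Strat) (y : Bool)
    {b b' : Fin n → Bool} :
    ∀ i : Fin n, (∀ k : Fin n, (DP.σ.symm k).val ≤ (DP.σ.symm i).val → lam k = none →
        b k = b' k) →
      tildeB DP lam y b i = tildeB DP lam y b' i := by
  have H : ∀ N, ∀ i : Fin n, (DP.σ.symm i).val < N →
      (∀ k : Fin n, (DP.σ.symm k).val ≤ (DP.σ.symm i).val → lam k = none → b k = b' k) →
      tildeB DP lam y b i = tildeB DP lam y b' i := by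
    intro N
    induction N with
    | zero => exact fun i hi => absurd hi (Nat.not_lt_zero _)
    | succ N ih =>
      intro i hi h
      rcases hl : lam i with _ | s
      · rw [tildeB_none hl, tildeB_none hl]
        exact h i le_rfl hl
      · rw [tildeB_some hl, tildeB_some hl]
        refine congrArg s.2 (DP.Bin_causal y i _ _ fun j hj => ?_)
        have hj' : (DP.σ.symm j).val < (DP.σ.symm i).val := hj
        exact ih j (by omega) (fun k hk hk' => h k (by omega) hk')
  exact fun i => H ((DP.σ.symm i).val + 1) i (Nat.lt_succ_self _)

lemma tildeA_idem (DP : Protocol n) (lam : Fin n → Option Strat) (x : Bool)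
    (a : Fin n → Bool) :
    ∀ i : Fin n, tildeA DP lam x (tildeA DP lam x a) i = tildeA DP lam x a i := by
  have H : ∀ N, ∀ i : Fin n, i.val < N →
      tildeA DP lam x (tildeA DP lam x a) i = tildeA DP lam x a i := by
    intro N
    induction N with
    | zero => exact fun i hi => absurd hi (Nat.not_lt_zero _)
    | succ N ih =>
      intro i hi
      rcases hl : lam i with _ | s
      · exact tildeA_none hl
      · rw [tildeA_some hl, tildeA_some hl]
        refine congrArg s.1 (DP.Ain_causal x i _ _ fun j hj => ?_)
        have hj' : j.val < i.val := hj
        exact ih j (by omega)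
  exact fun i => H (i.val + 1) i (Nat.lt_succ_self _)

lemma tildeB_idem (DP : Protocol n) (lam : Fin n → Option Strat) (y : Bool)
    (b : Fin n → Bool) :
    ∀ i : Fin n, tildeB DP lam y (tildeB DP lam y b) i = tildeB DP lam y b i := by
  have H : ∀ N, ∀ i : Fin n, (DP.σ.symm i).val < N →
      tildeB DP lam y (tildeB DP lam y b) i = tildeB DP lam y b i := by
    intro N
    induction N with
    | zero => exact fun i hi => absurd hi (Nat.not_lt_zero _)
    | succ N ih =>
      intro i hi
      rcases hl : lam i with _ | s
      · exact tildeB_none hl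
      · rw [tildeB_some hl, tildeB_some hl]
        refine congrArg s.2 (DP.Bin_causal y i _ _ fun j hj => ?_)
        have hj' : (DP.σ.symm j).val < (DP.σ.symm i).val := hj
        exact ih j (by omega)
  exact fun i => H ((DP.σ.symm i).val + 1) i (Nat.lt_succ_self _)

/-- The lifted protocol: run `DP` but replace the outputs of the copies marked local
by the deterministically simulated values. -/
def liftProt (DP : Protocol n) (lam : Fin n → Option Strat) : Protocol n where
  σ := DP.σ
  Ain := fun x i a => DP.Ain x i (tildeA DP lam x a)
  Bin := fun y i b => DP.Bin y i (tildeB DP lam y b)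
  Ain_causal := fun x i a a' h => DP.Ain_causal x i _ _ fun j hj =>
    tildeA_congr DP lam x j (fun k hk _ => h k (show k.val < i.val by
      have hj' : j.val < i.val := hj; omega))
  Bin_causal := fun y i b b' h => DP.Bin_causal y i _ _ fun j hj =>
    tildeB_congr DP lam y j (fun k hk _ => h k (show (DP.σ.symm k).val < (DP.σ.symm i).val by
      have hj' : (DP.σ.symm j).val < (DP.σ.symm i).val := hj; omega))
  f := fun x a => DP.f x (tildeA DP lam x a)
  g := fun y b => DP.g y (tildeB DP lam y b)

section Star

variable (Piso : BinBox) (DP : Protocol n) (lam : Fin n → Option Strat) (x y : Bool)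

lemma Kprod_eq_zero_left {a : Fin n → Bool} (b : Fin n → Bool)
    (ha : tildeA DP lam x a ≠ a) :
    ∏ i : Fin n, Kbox Piso (lam i) (DP.Ain x i a) (DP.Bin y i b) (a i, b i) = 0 := by
  have hs : (Finset.univ.filter (fun i : Fin n => a i ≠ tildeA DP lam x a i)).Nonempty := by
    rcases Function.ne_iff.mp ha with ⟨i, hi⟩
    exact ⟨i, Finset.mem_filter.mpr ⟨Finset.mem_univ _, fun h => hi h.symm⟩⟩
  obtain ⟨i, hi, hmin⟩ := Finset.exists_min_image _ (fun i : Fin n => i.val) hs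
  have hi' : a i ≠ tildeA DP lam x a i := (Finset.mem_filter.mp hi).2
  rcases hl : lam i with _ | s
  · exact absurd (tildeA_none hl) (fun h => hi' h.symm)
  · apply Finset.prod_eq_zero (Finset.mem_univ i)
    have hAin : DP.Ain x i a = DP.Ain x i (tildeA DP lam x a) := by
      refine DP.Ain_causal x i _ _ fun j hj => ?_
      by_contra hne
      have := hmin j (Finset.mem_filter.mpr ⟨Finset.mem_univ _, hne⟩)
      have hj' : j.val < i.val := hj
      omega
    rw [hl]
    show (if s.1 (DP.Ain x i a) = a i ∧ s.2 (DP.Bin y i b) = b i then (1:ℝ) else 0) = 0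
    rw [if_neg]
    rintro ⟨h1, -⟩
    exact hi' (h1 ▸ (by rw [hAin, ← tildeA_some hl]))

lemma Kprod_eq_zero_right (a : Fin n → Bool) {b : Fin n → Bool}
    (hb : tildeB DP lam y b ≠ b) :
    ∏ i : Fin n, Kbox Piso (lam i) (DP.Ain x i a) (DP.Bin y i b) (a i, b i) = 0 := by
  have hs : (Finset.univ.filter (fun i : Fin n => b i ≠ tildeB DP lam y b i)).Nonempty := by
    rcases Function.ne_iff.mp hb with ⟨i, hi⟩
    exact ⟨i, Finset.mem_filter.mpr ⟨Finset.mem_univ _, fun h => hi h.symm⟩⟩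
  obtain ⟨i, hi, hmin⟩ := Finset.exists_min_image _ (fun i : Fin n => (DP.σ.symm i).val) hs
  have hi' : b i ≠ tildeB DP lam y b i := (Finset.mem_filter.mp hi).2
  rcases hl : lam i with _ | s
  · exact absurd (tildeB_none hl) (fun h => hi' h.symm)
  · apply Finset.prod_eq_zero (Finset.mem_univ i)
    have hBin : DP.Bin y i b = DP.Bin y i (tildeB DP lam y b) := by
      refine DP.Bin_causal y i _ _ fun j hj => ?_
      by_contra hne
      have := hmin j (Finset.mem_filter.mpr ⟨Finset.mem_univ _, hne⟩)
      have hj' : (DP.σ.symm j).val < (DP.σ.symm i).val := hj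
      omega
    rw [hl]
    show (if s.1 (DP.Ain x i a) = a i ∧ s.2 (DP.Bin y i b) = b i then (1:ℝ) else 0) = 0
    rw [if_neg]
    rintro ⟨-, h2⟩
    exact hi' (h2 ▸ (by rw [hBin, ← tildeB_some hl]))

lemma Kprod_consistent {a b : Fin n → Bool}
    (ha : tildeA DP lam x a = a) (hb : tildeB DP lam y b = b) :
    ∏ i : Fin n, Kbox Piso (lam i) (DP.Ain x i a) (DP.Bin y i b) (a i, b i)
      = ∏ i : Fin n, (if lam i = none then
          Piso (DP.Ain x i a) (DP.Bin y i b) (a i, b i) else 1) := by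
  refine Finset.prod_congr rfl fun i _ => ?_
  rcases hl : lam i with _ | s
  · rw [if_pos rfl]; rfl
  · rw [if_neg (by simp [hl])]
    show (if s.1 (DP.Ain x i a) = a i ∧ s.2 (DP.Bin y i b) = b i then (1:ℝ) else 0) = 1
    rw [if_pos]
    constructor
    · conv_rhs => rw [← ha]
      rw [tildeA_some hl, ha]
    · conv_rhs => rw [← hb]
      rw [tildeB_some hl, hb]

lemma fiberA_empty {c : Fin n → Bool} (hc : tildeA DP lam x c ≠ c) :
    Finset.univ.filter (fun a => tildeA DP lam x a = c) = ∅ := by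
  refine Finset.filter_eq_empty_iff.mpr fun {a} _ h => hc ?_
  rw [← h]
  exact funext (tildeA_idem DP lam x a)

lemma fiberB_empty {d : Fin n → Bool} (hd : tildeB DP lam y d ≠ d) :
    Finset.univ.filter (fun b => tildeB DP lam y b = d) = ∅ := by
  refine Finset.filter_eq_empty_iff.mpr fun {b} _ h => hd ?_
  rw [← h]
  exact funext (tildeB_idem DP lam y b)

lemma fiberA_cyl {c : Fin n → Bool} (hc : tildeA DP lam x c = c) :
    Finset.univ.filter (fun a => tildeA DP lam x a = c)
      = Fintype.piFinset (fun i => if lam i = none then {c i} else (Finset.univ : Finset Bool)) := by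
  ext a
  simp only [Finset.mem_filter, Finset.mem_univ, true_and, Fintype.mem_piFinset]
  constructor
  · intro h i
    by_cases hl : lam i = none
    · rw [if_pos hl, Finset.mem_singleton, ← h, tildeA_none hl]
    · rw [if_neg hl]; exact Finset.mem_univ _
  · intro h
    funext i
    exact (tildeA_congr DP lam x i (fun k _ hk => by
      have := h k; rw [if_pos hk, Finset.mem_singleton] at this; exact this)).trans
      (congrFun hc i)

lemma fiberB_cyl {d : Fin n → Bool} (hd : tildeB DP lam y d = d) :
    Finset.univ.filter (fun b => tildeB DP lam y b = d)
      = Fintype.piFinset (fun i => if lam i = none then {d i} else (Finset.univ : Finset Bool)) := by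
  ext b
  simp only [Finset.mem_filter, Finset.mem_univ, true_and, Fintype.mem_piFinset]
  constructor
  · intro h i
    by_cases hl : lam i = none
    · rw [if_pos hl, Finset.mem_singleton, ← h, tildeB_none hl]
    · rw [if_neg hl]; exact Finset.mem_univ _
  · intro h
    funext i
    exact (tildeB_congr DP lam y i (fun k _ hk => by
      have := h k; rw [if_pos hk, Finset.mem_singleton] at this; exact this)).trans
      (congrFun hd i)

lemma cyl_sum (hPiso : IsBox Piso) (u v : Fin n → Bool) (c d : Fin n → Bool) :
    (∑ a ∈ Fintype.piFinset (fun i => if lam i = none then {c i} else (Finset.univ : Finset Bool)),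
      ∑ b ∈ Fintype.piFinset (fun i => if lam i = none then {d i} else (Finset.univ : Finset Bool)),
        ∏ i : Fin n, Piso (u i) (v i) (a i, b i))
      = ∏ i : Fin n, (if lam i = none then Piso (u i) (v i) (c i, d i) else 1) := by
  calc (∑ a ∈ Fintype.piFinset (fun i => if lam i = none then {c i} else (Finset.univ : Finset Bool)),
      ∑ b ∈ Fintype.piFinset (fun i => if lam i = none then {d i} else (Finset.univ : Finset Bool)),
        ∏ i : Fin n, Piso (u i) (v i) (a i, b i))
      = ∑ a ∈ Fintype.piFinset (fun i => if lam i = none then {c i} else (Finset.univ : Finset Bool)),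
          ∏ i : Fin n, ∑ β ∈ (if lam i = none then {d i} else (Finset.univ : Finset Bool)),
            Piso (u i) (v i) (a i, β) :=
        Finset.sum_congr rfl fun a _ =>
          (Finset.prod_univ_sum _ (fun i β => Piso (u i) (v i) (a i, β))).symm
    _ = ∏ i : Fin n, ∑ α ∈ (if lam i = none then {c i} else (Finset.univ : Finset Bool)),
          ∑ β ∈ (if lam i = none then {d i} else (Finset.univ : Finset Bool)),
            Piso (u i) (v i) (α, β) :=
        (Finset.prod_univ_sum _ (fun i α => ∑ β ∈ _, Piso (u i) (v i) (α, β))).symm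
    _ = ∏ i : Fin n, (if lam i = none then Piso (u i) (v i) (c i, d i) else 1) := by
        refine Finset.prod_congr rfl fun i _ => ?_
        by_cases hl : lam i = none
        · simp only [if_pos hl, Finset.sum_singleton]
        · simp only [if_neg hl]
          rw [← Fintype.sum_prod_type]
          exact hPiso.2 (u i) (v i)

/-- The key identity: the correlation contribution of the copies pattern `lam`
equals the correlation of the lifted protocol run on genuine copies of `Piso`. -/
lemma star (hPiso : IsBox Piso) :
    (∑ a : Fin n → Bool, ∑ b : Fin n → Bool,
      (∏ i : Fin n, Kbox Piso (lam i) (DP.Ain x i a) (DP.Bin y i b) (a i, b i)) *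
        ((1 - 2 * (if DP.f x a then (1:ℝ) else 0)) *
          (1 - 2 * (if DP.g y b then (1:ℝ) else 0))))
    = protCorr n Piso (liftProt DP lam) x y := by
  have hRHS : protCorr n Piso (liftProt DP lam) x y
      = ∑ a : Fin n → Bool, ∑ b : Fin n → Bool,
          (∏ i : Fin n, Piso (DP.Ain x i (tildeA DP lam x a))
              (DP.Bin y i (tildeB DP lam y b)) (a i, b i)) *
            ((1 - 2 * (if DP.f x (tildeA DP lam x a) then (1:ℝ) else 0)) *
              (1 - 2 * (if DP.g y (tildeB DP lam y b) then (1:ℝ) else 0))) := by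
    simp only [protCorr, wiringDist, liftProt, mul_assoc]
    rfl
  rw [hRHS]
  have fibB : ∀ h : (Fin n → Bool) → ℝ,
      ∑ b : Fin n → Bool, h b
        = ∑ d : Fin n → Bool, ∑ b ∈ Finset.univ.filter (fun b => tildeB DP lam y b = d), h b :=
    fun h => (Finset.sum_fiberwise Finset.univ (fun b => tildeB DP lam y b) h).symm
  -- the common middle expression
  have hR : (∑ a : Fin n → Bool, ∑ b : Fin n → Bool,
          (∏ i : Fin n, Piso (DP.Ain x i (tildeA DP lam x a))
              (DP.Bin y i (tildeB DP lam y b)) (a i, b i)) *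
            ((1 - 2 * (if DP.f x (tildeA DP lam x a) then (1:ℝ) else 0)) *
              (1 - 2 * (if DP.g y (tildeB DP lam y b) then (1:ℝ) else 0))))
      = ∑ c : Fin n → Bool, ∑ d : Fin n → Bool,
          (if tildeA DP lam x c = c ∧ tildeB DP lam y d = d then
            (∏ i : Fin n, (if lam i = none then
                Piso (DP.Ain x i c) (DP.Bin y i d) (c i, d i) else 1)) *
              ((1 - 2 * (if DP.f x c then (1:ℝ) else 0)) *
                (1 - 2 * (if DP.g y d then (1:ℝ) else 0)))
          else 0) := by
    rw [(Finset.sum_fiberwise Finset.univ (fun a => tildeA DP lam x a) _).symm]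
    refine Finset.sum_congr rfl fun c _ => ?_
    have inner : ∀ a ∈ Finset.univ.filter (fun a => tildeA DP lam x a = c),
        (∑ b : Fin n → Bool,
          (∏ i : Fin n, Piso (DP.Ain x i (tildeA DP lam x a))
              (DP.Bin y i (tildeB DP lam y b)) (a i, b i)) *
            ((1 - 2 * (if DP.f x (tildeA DP lam x a) then (1:ℝ) else 0)) *
              (1 - 2 * (if DP.g y (tildeB DP lam y b) then (1:ℝ) else 0))))
        = ∑ d : Fin n → Bool,
            ∑ b ∈ Finset.univ.filter (fun b => tildeB DP lam y b = d),
              (∏ i : Fin n, Piso (DP.Ain x i c) (DP.Bin y i (tildeB DP lam y b)) (a i, b i)) *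
                ((1 - 2 * (if DP.f x c then (1:ℝ) else 0)) *
                  (1 - 2 * (if DP.g y (tildeB DP lam y b) then (1:ℝ) else 0))) := by
      intro a ha
      rw [(Finset.mem_filter.mp ha).2]
      exact fibB _
    rw [Finset.sum_congr rfl inner, Finset.sum_comm]
    refine Finset.sum_congr rfl fun d _ => ?_
    by_cases hC : tildeA DP lam x c = c
    · by_cases hD : tildeB DP lam y d = d
      · rw [if_pos (show tildeA DP lam x c = c ∧ tildeB DP lam y d = d from ⟨hC, hD⟩)]
        have hbd : ∀ a : Fin n → Bool, ∀ b ∈ Finset.univ.filter (fun b => tildeB DP lam y b = d),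
            (∏ i : Fin n, Piso (DP.Ain x i c) (DP.Bin y i (tildeB DP lam y b)) (a i, b i)) *
                ((1 - 2 * (if DP.f x c then (1:ℝ) else 0)) *
                  (1 - 2 * (if DP.g y (tildeB DP lam y b) then (1:ℝ) else 0)))
            = (∏ i : Fin n, Piso (DP.Ain x i c) (DP.Bin y i d) (a i, b i)) *
                ((1 - 2 * (if DP.f x c then (1:ℝ) else 0)) *
                  (1 - 2 * (if DP.g y d then (1:ℝ) else 0))) := by
          intro a b hb
          rw [(Finset.mem_filter.mp hb).2]
        calc (∑ a ∈ Finset.univ.filter (fun a => tildeA DP lam x a = c),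
                ∑ b ∈ Finset.univ.filter (fun b => tildeB DP lam y b = d),
              (∏ i : Fin n, Piso (DP.Ain x i c) (DP.Bin y i (tildeB DP lam y b)) (a i, b i)) *
                ((1 - 2 * (if DP.f x c then (1:ℝ) else 0)) *
                  (1 - 2 * (if DP.g y (tildeB DP lam y b) then (1:ℝ) else 0))))
            = ∑ a ∈ Finset.univ.filter (fun a => tildeA DP lam x a = c),
                ∑ b ∈ Finset.univ.filter (fun b => tildeB DP lam y b = d),
                  (∏ i : Fin n, Piso (DP.Ain x i c) (DP.Bin y i d) (a i, b i)) *
                    ((1 - 2 * (if DP.f x c then (1:ℝ) else 0)) *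
                      (1 - 2 * (if DP.g y d then (1:ℝ) else 0))) :=
              Finset.sum_congr rfl fun a _ => Finset.sum_congr rfl (hbd a)
          _ = (∑ a ∈ Finset.univ.filter (fun a => tildeA DP lam x a = c),
                ∑ b ∈ Finset.univ.filter (fun b => tildeB DP lam y b = d),
                  ∏ i : Fin n, Piso (DP.Ain x i c) (DP.Bin y i d) (a i, b i)) *
                    ((1 - 2 * (if DP.f x c then (1:ℝ) else 0)) *
                      (1 - 2 * (if DP.g y d then (1:ℝ) else 0))) := by
              simp only [← Finset.sum_mul]
          _ = _ := by
              rw [fiberA_cyl DP lam x hC, fiberB_cyl DP lam y hD,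
                cyl_sum Piso lam hPiso (fun i => DP.Ain x i c) (fun i => DP.Bin y i d) c d]
      · rw [if_neg (show ¬(tildeA DP lam x c = c ∧ tildeB DP lam y d = d) from
            fun hcd => hD hcd.2), fiberB_empty DP lam y hD]
        simp
    · rw [if_neg (show ¬(tildeA DP lam x c = c ∧ tildeB DP lam y d = d) from
          fun hcd => hC hcd.1), fiberA_empty DP lam x hC]
      simp
  rw [hR]
  refine Finset.sum_congr rfl fun a _ => Finset.sum_congr rfl fun b _ => ?_
  by_cases hA : tildeA DP lam x a = a
  · by_cases hB : tildeB DP lam y b = b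
    · rw [if_pos (show tildeA DP lam x a = a ∧ tildeB DP lam y b = b from ⟨hA, hB⟩),
        Kprod_consistent Piso DP lam x y hA hB]
    · rw [if_neg (show ¬(tildeA DP lam x a = a ∧ tildeB DP lam y b = b) from
        fun hcd => hB hcd.2), Kprod_eq_zero_right Piso DP lam x y a hB, zero_mul]
  · rw [if_neg (show ¬(tildeA DP lam x a = a ∧ tildeB DP lam y b = b) from
      fun hcd => hA hcd.1), Kprod_eq_zero_left Piso DP lam x y b hA, zero_mul]

end Star

/-- Decomposition of the protocol correlation on the mixed box as a convex
combination of lifted-protocol correlations on `Piso`. -/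
lemma decomp {n : ℕ} (P Piso : BinBox) (hPiso : IsBox Piso) (w : Option Strat → ℝ)
    (hmixK : ∀ u v ab, P u v ab = ∑ o : Option Strat, w o * Kbox Piso o u v ab)
    (DP : Protocol n) (x y : Bool) :
    protCorr n P DP x y = ∑ lam : Fin n → Option Strat,
      (∏ i, w (lam i)) * protCorr n Piso (liftProt DP lam) x y := by
  have key : ∀ a b : Fin n → Bool,
      ∏ i : Fin n, P (DP.Ain x i a) (DP.Bin y i b) (a i, b i)
        = ∑ lam : Fin n → Option Strat, (∏ i, w (lam i)) *
            ∏ i : Fin n, Kbox Piso (lam i) (DP.Ain x i a) (DP.Bin y i b) (a i, b i) := by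
    intro a b
    calc ∏ i : Fin n, P (DP.Ain x i a) (DP.Bin y i b) (a i, b i)
        = ∏ i : Fin n, ∑ o : Option Strat,
            w o * Kbox Piso o (DP.Ain x i a) (DP.Bin y i b) (a i, b i) :=
          Finset.prod_congr rfl fun i _ => hmixK _ _ _
      _ = ∑ lam : Fin n → Option Strat, ∏ i : Fin n,
            (w (lam i) * Kbox Piso (lam i) (DP.Ain x i a) (DP.Bin y i b) (a i, b i)) :=
          Fintype.prod_sum _
      _ = _ := Finset.sum_congr rfl fun lam _ => Finset.prod_mul_distrib
  conv_lhs => simp only [protCorr, wiringDist]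
  calc (∑ a : Fin n → Bool, ∑ b : Fin n → Bool,
        (∏ i : Fin n, P (DP.Ain x i a) (DP.Bin y i b) (a i, b i)) *
          (1 - 2 * (if DP.f x a then (1:ℝ) else 0)) * (1 - 2 * (if DP.g y b then (1:ℝ) else 0)))
      = ∑ a : Fin n → Bool, ∑ b : Fin n → Bool, ∑ lam : Fin n → Option Strat,
          (∏ i, w (lam i)) *
            ((∏ i : Fin n, Kbox Piso (lam i) (DP.Ain x i a) (DP.Bin y i b) (a i, b i)) *
              ((1 - 2 * (if DP.f x a then (1:ℝ) else 0)) *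
                (1 - 2 * (if DP.g y b then (1:ℝ) else 0)))) := by
        refine Finset.sum_congr rfl fun a _ => Finset.sum_congr rfl fun b _ => ?_
        rw [key a b, Finset.sum_mul, Finset.sum_mul]
        exact Finset.sum_congr rfl fun lam _ => by ring
    _ = ∑ lam : Fin n → Option Strat, ∑ a : Fin n → Bool, ∑ b : Fin n → Bool,
          (∏ i, w (lam i)) *
            ((∏ i : Fin n, Kbox Piso (lam i) (DP.Ain x i a) (DP.Bin y i b) (a i, b i)) *
              ((1 - 2 * (if DP.f x a then (1:ℝ) else 0)) *
                (1 - 2 * (if DP.g y b then (1:ℝ) else 0)))) := by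
        have h1 : ∀ a : Fin n → Bool, (∑ b : Fin n → Bool, ∑ lam : Fin n → Option Strat,
            (∏ i, w (lam i)) *
              ((∏ i : Fin n, Kbox Piso (lam i) (DP.Ain x i a) (DP.Bin y i b) (a i, b i)) *
                ((1 - 2 * (if DP.f x a then (1:ℝ) else 0)) *
                  (1 - 2 * (if DP.g y b then (1:ℝ) else 0)))))
            = ∑ lam : Fin n → Option Strat, ∑ b : Fin n → Bool,
            (∏ i, w (lam i)) *
              ((∏ i : Fin n, Kbox Piso (lam i) (DP.Ain x i a) (DP.Bin y i b) (a i, b i)) *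
                ((1 - 2 * (if DP.f x a then (1:ℝ) else 0)) *
                  (1 - 2 * (if DP.g y b then (1:ℝ) else 0)))) := fun a => Finset.sum_comm
        rw [Finset.sum_congr rfl fun a _ => h1 a]
        exact Finset.sum_comm
    _ = _ := by
        refine Finset.sum_congr rfl fun lam _ => ?_
        rw [← star Piso DP lam x y hPiso, Finset.mul_sum]
        exact Finset.sum_congr rfl fun a _ => by rw [Finset.mul_sum]

/-- If `P = q·P_iso + (1-q)·P_L` is a convex combination of a box
`P_iso` and a local box `P_L`, then every deterministic distillation protocol on `n`
copies of `P` can be matched by one on `n` copies of `P_iso` achieving at least the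
same CHSH value; in particular `D(n,P) ≤ D(n,P_iso)`. -/
theorem distillable_nonlocality_le (n : ℕ) (P Piso PL : BinBox)
    (hP : IsBox P) (hPns : NonSignaling P)
    (hPiso : IsBox Piso) (hPisons : NonSignaling Piso)
    (hPL : IsBox PL) (hPLns : NonSignaling PL) (hPLloc : IsLocalBox PL)
    (q : ℝ) (hq0 : 0 ≤ q) (hq1 : q ≤ 1)
    (hmix : ∀ x y ab, P x y ab = q * Piso x y ab + (1 - q) * PL x y ab) :
    (∀ DP : Protocol n, ∃ DP' : Protocol n, NLval n P DP ≤ NLval n Piso DP') ∧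
    Dnl n P ≤ Dnl n Piso := by
  classical
  obtain ⟨cw, hc0, hc1, hcP⟩ := hPLloc
  set w : Option Strat → ℝ := fun o => match o with
    | none => q
    | some s => (1 - q) * cw s with hwdef
  have hw0 : ∀ o, 0 ≤ w o := by
    rintro (_ | s)
    · exact hq0
    · exact mul_nonneg (by linarith) (hc0 s)
  have hwsum : ∑ o : Option Strat, w o = 1 := by
    rw [univ_option, Finset.sum_insertNone]
    show q + ∑ s : Strat, (1 - q) * cw s = 1
    rw [← Finset.mul_sum, hc1]
    ring
  have hmixK : ∀ u v ab, P u v ab = ∑ o : Option Strat, w o * Kbox Piso o u v ab := by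
    intro u v ab
    obtain ⟨α, β⟩ := ab
    rw [hmix, univ_option, Finset.sum_insertNone]
    show q * Piso u v (α, β) + (1 - q) * PL u v (α, β)
      = q * Piso u v (α, β) + ∑ s : Strat,
          ((1 - q) * cw s) * (if s.1 u = α ∧ s.2 v = β then (1:ℝ) else 0)
    rw [hcP u v α β]
    congr 1
    rw [Finset.mul_sum]
    exact Finset.sum_congr rfl fun s _ => (mul_assoc _ _ _).symm
  have part1 : ∀ DP : Protocol n, ∃ DP' : Protocol n, NLval n P DP ≤ NLval n Piso DP' := by
    intro DP
    have hdec : ∀ x y : Bool, protCorr n P DP x y = ∑ lam : Fin n → Option Strat,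
        (∏ i, w (lam i)) * protCorr n Piso (liftProt DP lam) x y :=
      fun x y => decomp P Piso hPiso w hmixK DP x y
    obtain ⟨lam0, -, hmax⟩ := Finset.exists_max_image
      (Finset.univ : Finset (Fin n → Option Strat))
      (fun lam => NLval n Piso (liftProt DP lam)) ⟨fun _ => none, Finset.mem_univ _⟩
    refine ⟨liftProt DP lam0, ?_⟩
    have hW0 : ∀ lam : Fin n → Option Strat, 0 ≤ ∏ i, w (lam i) :=
      fun lam => Finset.prod_nonneg fun i _ => hw0 _
    have hW1 : ∑ lam : Fin n → Option Strat, ∏ i, w (lam i) = 1 := by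
      rw [← Fintype.prod_sum (fun (_ : Fin n) (o : Option Strat) => w o)]
      simp [hwsum]
    rw [NLval]
    refine ciSup_le fun xy => ?_
    have hcomb : protCorr n P DP xy.1 xy.2 + protCorr n P DP (!xy.1) xy.2 +
        protCorr n P DP xy.1 (!xy.2) - protCorr n P DP (!xy.1) (!xy.2)
        = ∑ lam : Fin n → Option Strat, (∏ i, w (lam i)) *
            (protCorr n Piso (liftProt DP lam) xy.1 xy.2 +
             protCorr n Piso (liftProt DP lam) (!xy.1) xy.2 +
             protCorr n Piso (liftProt DP lam) xy.1 (!xy.2) -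
             protCorr n Piso (liftProt DP lam) (!xy.1) (!xy.2)) := by
      rw [hdec, hdec, hdec, hdec, ← Finset.sum_add_distrib, ← Finset.sum_add_distrib,
        ← Finset.sum_sub_distrib]
      exact Finset.sum_congr rfl fun lam _ => by ring
    rw [hcomb]
    have hterm : ∀ lam : Fin n → Option Strat,
        |protCorr n Piso (liftProt DP lam) xy.1 xy.2 +
          protCorr n Piso (liftProt DP lam) (!xy.1) xy.2 +
          protCorr n Piso (liftProt DP lam) xy.1 (!xy.2) -
          protCorr n Piso (liftProt DP lam) (!xy.1) (!xy.2)|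
        ≤ NLval n Piso (liftProt DP lam) := by
      intro lam
      rw [NLval]
      exact le_ciSup (f := fun xy' : Bool × Bool =>
        |protCorr n Piso (liftProt DP lam) xy'.1 xy'.2 +
          protCorr n Piso (liftProt DP lam) (!xy'.1) xy'.2 +
          protCorr n Piso (liftProt DP lam) xy'.1 (!xy'.2) -
          protCorr n Piso (liftProt DP lam) (!xy'.1) (!xy'.2)|)
        (Set.Finite.bddAbove (Set.finite_range _)) xy
    calc |∑ lam : Fin n → Option Strat, (∏ i, w (lam i)) *
            (protCorr n Piso (liftProt DP lam) xy.1 xy.2 +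
             protCorr n Piso (liftProt DP lam) (!xy.1) xy.2 +
             protCorr n Piso (liftProt DP lam) xy.1 (!xy.2) -
             protCorr n Piso (liftProt DP lam) (!xy.1) (!xy.2))|
        ≤ ∑ lam : Fin n → Option Strat, |(∏ i, w (lam i)) *
            (protCorr n Piso (liftProt DP lam) xy.1 xy.2 +
             protCorr n Piso (liftProt DP lam) (!xy.1) xy.2 +
             protCorr n Piso (liftProt DP lam) xy.1 (!xy.2) -
             protCorr n Piso (liftProt DP lam) (!xy.1) (!xy.2))| :=
          Finset.abs_sum_le_sum_abs _ _
      _ ≤ ∑ lam : Fin n → Option Strat, (∏ i, w (lam i)) * NLval n Piso (liftProt DP lam0) := by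
          refine Finset.sum_le_sum fun lam _ => ?_
          rw [abs_mul, abs_of_nonneg (hW0 lam)]
          exact mul_le_mul_of_nonneg_left
            ((hterm lam).trans (hmax lam (Finset.mem_univ _))) (hW0 lam)
      _ = NLval n Piso (liftProt DP lam0) := by rw [← Finset.sum_mul, hW1, one_mul]
  refine ⟨part1, ?_⟩
  have hsgn : ∀ p : Bool, |1 - 2 * (if p then (1:ℝ) else 0)| ≤ 1 := by
    intro p; cases p <;> norm_num
  set B : ℝ := (Fintype.card (Fin n → Bool) : ℝ) with hBdef
  have hbdd : ∀ DPp : Protocol n, NLval n Piso DPp ≤ 4 * (B * B) := by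
    intro DPp
    have hpc : ∀ x y : Bool, |protCorr n Piso DPp x y| ≤ B * B := by
      intro x y
      have hterm1 : ∀ a b : Fin n → Bool,
          |wiringDist n Piso DPp x y a b * (1 - 2 * (if DPp.f x a then (1:ℝ) else 0)) *
            (1 - 2 * (if DPp.g y b then (1:ℝ) else 0))| ≤ 1 := by
        intro a b
        rw [abs_mul, abs_mul]
        simp only [wiringDist]
        have hw1 : |∏ i : Fin n, Piso (DPp.Ain x i a) (DPp.Bin y i b) (a i, b i)| ≤ 1 := by
          rw [abs_of_nonneg (Finset.prod_nonneg fun i _ => hPiso.1 _ _ _)]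
          refine Finset.prod_le_one (fun i _ => hPiso.1 _ _ _) fun i _ => ?_
          calc Piso (DPp.Ain x i a) (DPp.Bin y i b) (a i, b i)
              ≤ ∑ ab : Bool × Bool, Piso (DPp.Ain x i a) (DPp.Bin y i b) ab :=
                Finset.single_le_sum
                  (f := fun ab : Bool × Bool => Piso (DPp.Ain x i a) (DPp.Bin y i b) ab)
                  (fun ab _ => hPiso.1 _ _ _) (Finset.mem_univ _)
            _ = 1 := hPiso.2 _ _
        exact mul_le_one₀ (mul_le_one₀ hw1 (abs_nonneg _) (hsgn _)) (abs_nonneg _) (hsgn _)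
      calc |protCorr n Piso DPp x y|
          ≤ ∑ a : Fin n → Bool, |∑ b : Fin n → Bool,
              wiringDist n Piso DPp x y a b * (1 - 2 * (if DPp.f x a then (1:ℝ) else 0)) *
                (1 - 2 * (if DPp.g y b then (1:ℝ) else 0))| := Finset.abs_sum_le_sum_abs _ _
        _ ≤ ∑ a : Fin n → Bool, ∑ b : Fin n → Bool,
              |wiringDist n Piso DPp x y a b * (1 - 2 * (if DPp.f x a then (1:ℝ) else 0)) *
                (1 - 2 * (if DPp.g y b then (1:ℝ) else 0))| :=
            Finset.sum_le_sum fun a _ => Finset.abs_sum_le_sum_abs _ _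
        _ ≤ ∑ _a : Fin n → Bool, ∑ _b : Fin n → Bool, (1:ℝ) :=
            Finset.sum_le_sum fun a _ => Finset.sum_le_sum fun b _ => hterm1 a b
        _ = B * B := by
            simp only [Finset.sum_const, Finset.card_univ, nsmul_eq_mul, mul_one, hBdef]
    rw [NLval]
    refine ciSup_le fun xy => ?_
    have h1 := abs_le.mp (hpc xy.1 xy.2)
    have h2 := abs_le.mp (hpc (!xy.1) xy.2)
    have h3 := abs_le.mp (hpc xy.1 (!xy.2))
    have h4 := abs_le.mp (hpc (!xy.1) (!xy.2))
    rw [abs_le]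
    constructor <;>
      linarith [h1.1, h1.2, h2.1, h2.2, h3.1, h3.2, h4.1, h4.2, mul_self_nonneg B]
  haveI : Nonempty (Protocol n) := ⟨⟨1, fun _ _ _ => false, fun _ _ _ => false,
    fun _ _ _ _ _ => rfl, fun _ _ _ _ _ => rfl, fun _ _ => false, fun _ _ => false⟩⟩
  have hba : BddAbove (Set.range (NLval n Piso)) := by
    refine ⟨4 * (B * B), ?_⟩
    rintro v ⟨DPp, rfl⟩
    exact hbdd DPp
  rw [Dnl, Dnl]
  exact ciSup_le fun DP => by
    obtain ⟨DP', h⟩ := part1 DP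
    exact h.trans (le_ciSup hba DP')
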